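/- Let X be an n-dimensional random vector with identically distributed components and distribution F ∈ 𝒫_𝒟_n, and Y an independent random variable with G(0−) = 0, G(0) < 1. Suppose there is a function a(x) → ∞ with a(x)/x → 0 and Ḡ(a(x)) = o(H̄(t,x)) for all t, where H̄(t,x) = P[YX₁ > t₁x, …, YX_n > t_nx]. Then the distribution H of the scalar product Y·X belongs to 𝒫_𝒟_n: for all v > 1 componentwise and all t ∈ (0,∞]ⁿ \ {(∞,…,∞)}, limsup_{x→∞} H̄(v t, x)/H̄(t, x) < 1. -/

import Mathlib

open Filter MeasureTheory Asymptotics Topology ProbabilityTheory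

noncomputable def rtail {Ω : Type*} [MeasureSpace Ω] (Z : Ω → ℝ) (x : ℝ) : ℝ :=
  (ℙ {ω | x < Z ω}).toReal

def PosDec (T : ℝ → ℝ) : Prop :=
  ∀ v : ℝ, 1 < v → limsup (fun x => T (v * x) / T x) atTop < 1

noncomputable def jtail {Ω : Type*} [MeasureSpace Ω] {n : ℕ} (X : Fin n → Ω → ℝ)
    (S : Finset (Fin n)) (t : Fin n → ℝ) (x : ℝ) : ℝ :=
  (ℙ {ω | ∀ i ∈ S, t i * x < X i ω}).toReal

lemma pi_event_mble {n : ℕ} (S : Finset (Fin n)) (b : Fin n → ℝ) :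
    MeasurableSet {p : Fin n → ℝ | ∀ i ∈ S, b i < p i} := by
  have h : {p : Fin n → ℝ | ∀ i ∈ S, b i < p i} = ⋂ i ∈ S, {p : Fin n → ℝ | b i < p i} := by
    ext p; simp
  rw [h]
  exact MeasurableSet.biInter S.countable_toSet
    (fun i _ => measurableSet_lt measurable_const (measurable_pi_apply i))

section key
variable {Ω : Type*} [MeasureSpace Ω] [IsProbabilityMeasure (ℙ : Measure Ω)] {n : ℕ}

lemma key (X : Fin n → Ω → ℝ) (Y : Ω → ℝ)
    (hXm : ∀ i, Measurable (X i)) (hYm : Measurable Y)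
    (hindep : IndepFun (fun ω i => X i ω) Y ℙ)
    (hGneg : ℙ {ω | Y ω < 0} = 0)
    (S : Finset (Fin n)) (hS : S.Nonempty) (t v : Fin n → ℝ)
    (ht : ∀ i, 0 < t i) (hv : ∀ i, 1 < v i)
    (hr : limsup (fun z => jtail X S (fun i => v i * t i) z / jtail X S t z) atTop < 1)
    (a : ℝ → ℝ) (ha1 : Tendsto a atTop atTop)
    (ha2 : Tendsto (fun x => a x / x) atTop (𝓝 0))
    (ho : (fun x => rtail Y (a x)) =o[atTop] fun x => jtail (fun i ω => Y ω * X i ω) S t x) :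
    limsup (fun x => jtail (fun i ω => Y ω * X i ω) S (fun i => v i * t i) x /
        jtail (fun i ω => Y ω * X i ω) S t x) atTop < 1 := by
  classical
  set Z : Fin n → Ω → ℝ := fun i ω => Y ω * X i ω with hZ
  set r : ℝ → ℝ := fun z => jtail X S (fun i => v i * t i) z / jtail X S t z with hrdef
  have hr0 : ∀ z, 0 ≤ r z := fun z => div_nonneg ENNReal.toReal_nonneg ENNReal.toReal_nonneg
  have hmono : ∀ z : ℝ, 0 ≤ z →
      {ω | ∀ i ∈ S, (v i * t i) * z < X i ω} ⊆ {ω | ∀ i ∈ S, t i * z < X i ω} := by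
    intro z hz ω hω i hi
    have key : t i * z ≤ (v i * t i) * z := by
      nlinarith [mul_nonneg (mul_nonneg (ht i).le (sub_nonneg.mpr (hv i).le)) hz]
    exact lt_of_le_of_lt key (hω i hi)
  have hbdd : IsBoundedUnder (· ≤ ·) atTop r := by
    refine ⟨1, ?_⟩
    rw [eventually_map]
    filter_upwards [eventually_ge_atTop (0:ℝ)] with z hz
    exact div_le_one_of_le₀
      (ENNReal.toReal_mono (measure_ne_top _ _) (measure_mono (hmono z hz)))
      ENNReal.toReal_nonneg
  have hL0 : (0:ℝ) ≤ limsup r atTop :=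
    le_limsup_of_frequently_le ((Eventually.of_forall hr0).frequently) hbdd
  set u : ℝ := (1 + limsup r atTop) / 2 with hu
  have hu1 : u < 1 := by rw [hu]; linarith
  have hu0 : (0:ℝ) ≤ u := by rw [hu]; linarith
  have huL : limsup r atTop < u := by rw [hu]; linarith
  obtain ⟨x1, hx1⟩ : ∃ x1 : ℝ, ∀ z ≥ x1, r z ≤ u := by
    have := eventually_lt_of_limsup_lt huL hbdd
    rw [eventually_atTop] at this
    obtain ⟨x1, h⟩ := this
    exact ⟨x1, fun z hz => (h z hz).le⟩
  set x0 : ℝ := x1 ⊔ 0 with hx0def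
  have hx0 : ∀ z ≥ x0, r z ≤ u := fun z hz => hx1 z (le_trans le_sup_left hz)
  have hx00 : (0:ℝ) ≤ x0 := le_sup_right
  -- measure setup
  have hXvm : Measurable (fun ω i => X i ω) := measurable_pi_lambda _ hXm
  set μ : Measure (Fin n → ℝ) := Measure.map (fun ω i => X i ω) ℙ with hμ
  set ν : Measure ℝ := Measure.map Y ℙ with hν
  haveI : IsProbabilityMeasure μ := Measure.isProbabilityMeasure_map hXvm.aemeasurable
  haveI : IsProbabilityMeasure ν := Measure.isProbabilityMeasure_map hYm.aemeasurable
  have hmap : Measure.map (fun ω => (fun i => X i ω, Y ω)) ℙ = μ.prod ν :=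
    (indepFun_iff_map_prod_eq_prod_map_map hXvm.aemeasurable hYm.aemeasurable).mp hindep
  -- main pointwise inequality
  have main : ∀ x : ℝ, 0 < x → 0 < a x → x0 * a x ≤ x →
      jtail Z S (fun i => v i * t i) x ≤ u * jtail Z S t x + rtail Y (a x) := by
    intro x hx hax hx0ax
    set M := a x with hM
    set T : (Fin n → ℝ) → Set ((Fin n → ℝ) × ℝ) := fun c =>
      {q | (∀ i ∈ S, c i * x < q.2 * q.1 i) ∧ q.2 ∈ Set.Ioc 0 M} with hT
    have hTm : ∀ c, MeasurableSet (T c) := by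
      intro c
      have h1 : T c = (⋂ i ∈ S, {q : (Fin n → ℝ) × ℝ | c i * x < q.2 * q.1 i})
          ∩ {q : (Fin n → ℝ) × ℝ | q.2 ∈ Set.Ioc 0 M} := by
        ext q; simp [hT]
      rw [h1]
      exact (MeasurableSet.biInter S.countable_toSet (fun i _ =>
        measurableSet_lt measurable_const
          (measurable_snd.mul ((measurable_pi_apply i).comp measurable_fst)))).inter
        (measurable_snd measurableSet_Ioc)
    have hpre : ∀ c, (fun ω => (fun i => X i ω, Y ω)) ⁻¹' (T c)
        = {ω | ∀ i ∈ S, c i * x < Y ω * X i ω} ∩ {ω | 0 < Y ω ∧ Y ω ≤ M} := by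
      intro c; ext ω; simp [hT, Set.mem_Ioc]
    have hprob : ∀ c, (μ.prod ν) (T c) = ℙ ((fun ω => (fun i => X i ω, Y ω)) ⁻¹' (T c)) := by
      intro c
      rw [← hmap, Measure.map_apply (hXvm.prodMk hYm) (hTm c)]
    -- step B : slice comparison
    have stepB : (μ.prod ν) (T (fun i => v i * t i)) ≤ ENNReal.ofReal u * (μ.prod ν) (T t) := by
      rw [Measure.prod_apply_symm (hTm _), Measure.prod_apply_symm (hTm _),
        ← MeasureTheory.lintegral_const_mul' _ _ ENNReal.ofReal_ne_top]
      refine lintegral_mono fun y => ?_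
      by_cases hy : 0 < y ∧ y ≤ M
      · obtain ⟨hy1, hy2⟩ := hy
        have hslice : ∀ c : Fin n → ℝ, ((fun p => (p, y)) ⁻¹' (T c))
            = {p : Fin n → ℝ | ∀ i ∈ S, c i * (x / y) < p i} := by
          intro c; ext p
          simp only [hT, Set.mem_preimage, Set.mem_setOf_eq, Set.mem_Ioc]
          constructor
          · rintro ⟨h1, -⟩ i hi
            have h2 := h1 i hi
            rw [← mul_div_assoc, div_lt_iff₀ hy1, mul_comm (p i) y]
            exact h2
          · intro h
            refine ⟨fun i hi => ?_, hy1, hy2⟩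
            have h2 := h i hi
            rw [← mul_div_assoc, div_lt_iff₀ hy1, mul_comm (p i) y] at h2
            exact h2
        rw [hslice, hslice]
        have hμset : ∀ c : Fin n → ℝ, μ {p : Fin n → ℝ | ∀ i ∈ S, c i * (x / y) < p i}
            = ℙ {ω | ∀ i ∈ S, c i * (x / y) < X i ω} := by
          intro c
          rw [hμ, Measure.map_apply hXvm (pi_event_mble S (fun i => c i * (x / y)))]
          rfl
        have hzx0 : x0 ≤ x / y := by
          rw [le_div_iff₀ hy1]
          nlinarith [mul_le_mul_of_nonneg_left hy2 hx00]
        have hz0 : (0:ℝ) ≤ x / y := le_trans hx00 hzx0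
        have hsub : {p : Fin n → ℝ | ∀ i ∈ S, (v i * t i) * (x / y) < p i}
            ⊆ {p : Fin n → ℝ | ∀ i ∈ S, t i * (x / y) < p i} := by
          intro p hp i hi
          have key : t i * (x / y) ≤ (v i * t i) * (x / y) := by
            nlinarith [mul_nonneg (mul_nonneg (ht i).le (sub_nonneg.mpr (hv i).le)) hz0]
          exact lt_of_le_of_lt key (hp i hi)
        rcases eq_or_ne (μ {p : Fin n → ℝ | ∀ i ∈ S, t i * (x / y) < p i}) 0 with hB | hB
        · have h0 : μ {p : Fin n → ℝ | ∀ i ∈ S, (v i * t i) * (x / y) < p i} = 0 :=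
            le_antisymm (le_trans (measure_mono hsub) hB.le) zero_le
          simp [h0]
        · have hru : r (x / y) ≤ u := hx0 _ hzx0
          have hBfin : μ {p : Fin n → ℝ | ∀ i ∈ S, t i * (x / y) < p i} ≠ ⊤ := measure_ne_top _ _
          have hBpos : 0 < (μ {p : Fin n → ℝ | ∀ i ∈ S, t i * (x / y) < p i}).toReal :=
            ENNReal.toReal_pos hB hBfin
          have hrz : r (x / y)
              = (μ {p : Fin n → ℝ | ∀ i ∈ S, (v i * t i) * (x / y) < p i}).toReal
              / (μ {p : Fin n → ℝ | ∀ i ∈ S, t i * (x / y) < p i}).toReal := by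
            rw [hrdef]
            simp only [jtail, hμset]
          have hAle : (μ {p : Fin n → ℝ | ∀ i ∈ S, (v i * t i) * (x / y) < p i}).toReal
              ≤ u * (μ {p : Fin n → ℝ | ∀ i ∈ S, t i * (x / y) < p i}).toReal := by
            rw [hrz, div_le_iff₀ hBpos] at hru
            linarith [hru]
          calc μ {p : Fin n → ℝ | ∀ i ∈ S, (v i * t i) * (x / y) < p i}
              = ENNReal.ofReal
                ((μ {p : Fin n → ℝ | ∀ i ∈ S, (v i * t i) * (x / y) < p i}).toReal) :=
                (ENNReal.ofReal_toReal (measure_ne_top _ _)).symm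
            _ ≤ ENNReal.ofReal (u * (μ {p : Fin n → ℝ | ∀ i ∈ S, t i * (x / y) < p i}).toReal) :=
                ENNReal.ofReal_le_ofReal hAle
            _ = ENNReal.ofReal u * μ {p : Fin n → ℝ | ∀ i ∈ S, t i * (x / y) < p i} := by
                rw [ENNReal.ofReal_mul hu0, ENNReal.ofReal_toReal hBfin]
      · have hempty : ((fun p => (p, y)) ⁻¹' (T (fun i => v i * t i))) = ∅ := by
          ext p
          simp only [hT, Set.mem_preimage, Set.mem_setOf_eq, Set.mem_Ioc, Set.mem_empty_iff_false,
            iff_false]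
          rintro ⟨-, h2⟩
          exact hy h2
        simp [hempty]
    -- step A : split and combine
    have hA : ℙ {ω | ∀ i ∈ S, (v i * t i) * x < Z i ω}
        ≤ ENNReal.ofReal u * ℙ {ω | ∀ i ∈ S, t i * x < Z i ω} + ℙ {ω | M < Y ω} := by
      have hsplit : {ω | ∀ i ∈ S, (v i * t i) * x < Z i ω}
          ⊆ ((fun ω => (fun i => X i ω, Y ω)) ⁻¹' (T (fun i => v i * t i)))
            ∪ {ω | Y ω < 0} ∪ {ω | M < Y ω} := by
        intro ω hω
        rcases lt_trichotomy (Y ω) 0 with hY | hY | hY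
        · exact Or.inl (Or.inr hY)
        · exfalso
          obtain ⟨i, hi⟩ := hS
          have h1 := hω i hi
          have h2 : Z i ω = 0 := by rw [hZ]; simp [hY]
          rw [h2] at h1
          nlinarith [mul_pos (mul_pos (lt_trans zero_lt_one (hv i)) (ht i)) hx]
        · rcases le_or_gt (Y ω) M with hYM | hYM
          · exact Or.inl (Or.inl (by rw [hpre]; exact ⟨hω, hY, hYM⟩))
          · exact Or.inr hYM
      calc ℙ {ω | ∀ i ∈ S, (v i * t i) * x < Z i ω}
          ≤ ℙ (((fun ω => (fun i => X i ω, Y ω)) ⁻¹' (T (fun i => v i * t i)))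
            ∪ {ω | Y ω < 0} ∪ {ω | M < Y ω}) := measure_mono hsplit
        _ ≤ ℙ (((fun ω => (fun i => X i ω, Y ω)) ⁻¹' (T (fun i => v i * t i)))
            ∪ {ω | Y ω < 0}) + ℙ {ω | M < Y ω} := measure_union_le _ _
        _ ≤ ℙ ((fun ω => (fun i => X i ω, Y ω)) ⁻¹' (T (fun i => v i * t i)))
            + ℙ {ω | Y ω < 0} + ℙ {ω | M < Y ω} :=
            add_le_add_left (measure_union_le _ _) _
        _ = ℙ ((fun ω => (fun i => X i ω, Y ω)) ⁻¹' (T (fun i => v i * t i)))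
            + ℙ {ω | M < Y ω} := by rw [hGneg, add_zero]
        _ = (μ.prod ν) (T (fun i => v i * t i)) + ℙ {ω | M < Y ω} := by rw [hprob]
        _ ≤ ENNReal.ofReal u * (μ.prod ν) (T t) + ℙ {ω | M < Y ω} :=
            add_le_add_left stepB _
        _ = ENNReal.ofReal u * ℙ ((fun ω => (fun i => X i ω, Y ω)) ⁻¹' (T t))
            + ℙ {ω | M < Y ω} := by rw [hprob]
        _ ≤ ENNReal.ofReal u * ℙ {ω | ∀ i ∈ S, t i * x < Z i ω} + ℙ {ω | M < Y ω} := by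
            refine add_le_add_left (mul_le_mul_right (measure_mono ?_) _) _
            rw [hpre]
            exact Set.inter_subset_left
    -- take toReal
    have hfin1 : ENNReal.ofReal u * ℙ {ω | ∀ i ∈ S, t i * x < Z i ω} ≠ ⊤ :=
      ENNReal.mul_ne_top ENNReal.ofReal_ne_top (measure_ne_top _ _)
    calc jtail Z S (fun i => v i * t i) x
        = (ℙ {ω | ∀ i ∈ S, (v i * t i) * x < Z i ω}).toReal := rfl
      _ ≤ (ENNReal.ofReal u * ℙ {ω | ∀ i ∈ S, t i * x < Z i ω} + ℙ {ω | M < Y ω}).toReal :=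
          ENNReal.toReal_mono (ENNReal.add_ne_top.mpr ⟨hfin1, measure_ne_top _ _⟩) hA
      _ = u * jtail Z S t x + rtail Y (a x) := by
          rw [ENNReal.toReal_add hfin1 (measure_ne_top _ _), ENNReal.toReal_mul,
            ENNReal.toReal_ofReal hu0]
          rfl
  -- eventual bound and conclusion
  set c : ℝ := (1 - u) / 2 with hc
  have hcpos : 0 < c := by rw [hc]; linarith
  have hev1 : ∀ᶠ x : ℝ in atTop, 0 < x := eventually_gt_atTop (0:ℝ)
  have hev2 : ∀ᶠ x : ℝ in atTop, 0 < a x := ha1.eventually (eventually_gt_atTop (0:ℝ))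
  have hev3 : ∀ᶠ x : ℝ in atTop, x0 * a x ≤ x := by
    have h1 : ∀ᶠ x : ℝ in atTop, a x / x < 1 / (x0 + 1) :=
      ha2.eventually (eventually_lt_nhds (show (0:ℝ) < 1 / (x0 + 1) by positivity))
    filter_upwards [h1, hev1, hev2] with x hx1 hx2 hx3
    rw [div_lt_div_iff₀ hx2 (by positivity)] at hx1
    nlinarith
  have hev4 : ∀ᶠ x in atTop, |rtail Y (a x)| ≤ c * |jtail Z S t x| := by
    have := ho.bound hcpos
    simpa [Real.norm_eq_abs] using this
  have hevfin : ∀ᶠ x in atTop,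
      jtail Z S (fun i => v i * t i) x / jtail Z S t x ≤ u + c := by
    filter_upwards [hev1, hev2, hev3, hev4] with x h1 h2 h3 h4
    have hmain := main x h1 h2 h3
    have hGnn : (0:ℝ) ≤ rtail Y (a x) := ENNReal.toReal_nonneg
    have hDnn : (0:ℝ) ≤ jtail Z S t x := ENNReal.toReal_nonneg
    rw [abs_of_nonneg hGnn, abs_of_nonneg hDnn] at h4
    rcases eq_or_lt_of_le hDnn with hD | hD
    · have hG0 : rtail Y (a x) = 0 :=
        le_antisymm (by rw [← hD] at h4; linarith) ENNReal.toReal_nonneg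
      have hN0 : jtail Z S (fun i => v i * t i) x = 0 :=
        le_antisymm (by rw [← hD] at hmain; rw [hG0] at hmain; linarith) ENNReal.toReal_nonneg
      rw [hN0]
      simp
      positivity
    · rw [div_le_iff₀ hD]
      nlinarith
  have hfinal : limsup (fun x => jtail Z S (fun i => v i * t i) x / jtail Z S t x) atTop
      ≤ u + c :=
    limsup_le_of_le (isCoboundedUnder_le_of_le atTop (x := 0)
      (fun x => div_nonneg ENNReal.toReal_nonneg ENNReal.toReal_nonneg)) hevfin
  calc limsup (fun x => jtail Z S (fun i => v i * t i) x / jtail Z S t x) atTop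
      ≤ u + c := hfinal
    _ < 1 := by rw [hc]; linarith

end key


section helpers
variable {Ω : Type*} [MeasureSpace Ω] [IsProbabilityMeasure (ℙ : Measure Ω)] {n : ℕ}

/-- Equal marginal laws + independence ⇒ equal product tails. -/
lemma eqlaw (X : Fin n → Ω → ℝ) (Y : Ω → ℝ)
    (hXm : ∀ i, Measurable (X i)) (hYm : Measurable Y)
    (hid : ∀ i j : Fin n, ∀ x : ℝ, ℙ {ω | x < X i ω} = ℙ {ω | x < X j ω})
    (hindep : IndepFun (fun ω i => X i ω) Y ℙ)
    (i j : Fin n) (x : ℝ) :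
    ℙ {ω | x < Y ω * X i ω} = ℙ {ω | x < Y ω * X j ω} := by
  have hXvm : Measurable (fun ω i => X i ω) := measurable_pi_lambda _ hXm
  have hind : ∀ k : Fin n, IndepFun (X k) Y ℙ := by
    intro k
    have := hindep.comp (measurable_pi_apply k) measurable_id
    exact this
  have hlawIoi : ∀ k : Fin n, ∀ z : ℝ, (Measure.map (X k) ℙ) (Set.Ioi z) = ℙ {ω | z < X k ω} := by
    intro k z
    rw [Measure.map_apply (hXm k) measurableSet_Ioi]
    rfl
  haveI : ∀ k : Fin n, IsProbabilityMeasure (Measure.map (X k) ℙ) :=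
    fun k => Measure.isProbabilityMeasure_map (hXm k).aemeasurable
  have hlaw : Measure.map (X i) ℙ = Measure.map (X j) ℙ := by
    refine MeasureTheory.Measure.ext_of_Iic _ _ (fun z => ?_)
    have hIic : ∀ k : Fin n, (Measure.map (X k) ℙ) (Set.Iic z)
        = 1 - (Measure.map (X k) ℙ) (Set.Ioi z) := by
      intro k
      rw [show Set.Iic z = (Set.Ioi z)ᶜ by simp, prob_compl_eq_one_sub measurableSet_Ioi]
    rw [hIic i, hIic j, hlawIoi i, hlawIoi j, hid i j z]
  have hmapk : ∀ k : Fin n, Measure.map (fun ω => (X k ω, Y ω)) ℙ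
      = (Measure.map (X k) ℙ).prod (Measure.map Y ℙ) := fun k =>
    (indepFun_iff_map_prod_eq_prod_map_map (hXm k).aemeasurable hYm.aemeasurable).mp (hind k)
  have hms : MeasurableSet {q : ℝ × ℝ | x < q.2 * q.1} :=
    measurableSet_lt measurable_const (measurable_snd.mul measurable_fst)
  have hset : ∀ k : Fin n, {ω | x < Y ω * X k ω}
      = (fun ω => (X k ω, Y ω)) ⁻¹' {q : ℝ × ℝ | x < q.2 * q.1} := by
    intro k; rfl
  rw [hset i, hset j,
    ← Measure.map_apply ((hXm i).prodMk hYm) hms,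
    ← Measure.map_apply ((hXm j).prodMk hYm) hms,
    hmapk i, hmapk j, hlaw]

/-- positivity of the product tail. -/
lemma prodtail_pos (X0 : Ω → ℝ) (Y : Ω → ℝ)
    (hXm : Measurable X0) (hYm : Measurable Y)
    (hind : IndepFun X0 Y ℙ)
    (hG0 : ℙ {ω | Y ω ≤ 0} < 1)
    (F0 : ℝ → ℝ) (hF0pos : ∀ x, 0 < F0 x)
    (c : ℝ) (hc : 0 < c) (hk : Tendsto (fun x => rtail X0 x / F0 x) atTop (𝓝 c))
    (x : ℝ) : 0 < rtail (fun ω => Y ω * X0 ω) x := by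
  -- ℙ[Y > 0] ≠ 0
  have hYpos : ℙ {ω | 0 < Y ω} ≠ 0 := by
    intro h
    have hcompl : {ω | 0 < Y ω} = {ω | Y ω ≤ 0}ᶜ := by ext ω; simp [not_le]
    rw [hcompl, prob_compl_eq_one_sub (measurableSet_le hYm measurable_const)] at h
    rw [tsub_eq_zero_iff_le] at h
    exact hG0.ne (le_antisymm prob_le_one h)
  -- ∃ ε > 0 with ℙ[Y ≥ ε] ≠ 0
  obtain ⟨ε, hε, hYe⟩ : ∃ ε : ℝ, 0 < ε ∧ ℙ {ω | ε ≤ Y ω} ≠ 0 := by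
    by_contra h
    push_neg at h
    have hun : {ω | 0 < Y ω} ⊆ ⋃ k : ℕ, {ω | (1:ℝ)/(k+1) ≤ Y ω} := by
      intro ω hω
      obtain ⟨k, hk⟩ := exists_nat_one_div_lt (show 0 < Y ω from hω)
      exact Set.mem_iUnion.mpr ⟨k, le_of_lt hk⟩
    have : ℙ (⋃ k : ℕ, {ω | (1:ℝ)/(k+1) ≤ Y ω}) = 0 :=
      measure_iUnion_null (fun k => h (1/(k+1)) (by positivity))
    exact hYpos (le_antisymm (le_trans (measure_mono hun) this.le) zero_le)
  -- tail of X0 positive everywhere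
  have hXpos : ∀ z : ℝ, ℙ {ω | z < X0 ω} ≠ 0 := by
    intro z
    have hev : ∀ᶠ w in atTop, c/2 < rtail X0 w / F0 w :=
      hk.eventually (eventually_gt_nhds (by linarith))
    rw [eventually_atTop] at hev
    obtain ⟨w0, hw0⟩ := hev
    set w := max z w0 with hw
    have h1 : c/2 < rtail X0 w / F0 w := hw0 w (le_max_right _ _)
    have h2 : rtail X0 w ≠ 0 := by
      intro h
      rw [h, zero_div] at h1
      linarith
    have h3 : ℙ {ω | w < X0 ω} ≠ 0 := by
      intro h
      exact h2 (by rw [rtail, h]; simp)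
    intro h
    refine h3 (le_antisymm (le_trans (measure_mono ?_) h.le) zero_le)
    intro ω hω
    exact lt_of_le_of_lt (le_max_left _ _) (show w < X0 ω from hω)
  -- combine
  set z := |x| / ε + 1 with hz
  have hz0 : 0 < z := by positivity
  have hsub : X0 ⁻¹' (Set.Ioi z) ∩ Y ⁻¹' (Set.Ici ε) ⊆ {ω | x < Y ω * X0 ω} := by
    rintro ω ⟨h1, h2⟩
    simp only [Set.mem_preimage, Set.mem_Ioi, Set.mem_Ici] at h1 h2
    have hx1 : ε * z > |x| := by
      rw [hz]
      have : ε * (|x| / ε + 1) = |x| + ε := by field_simp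
      rw [this]
      linarith
    calc x ≤ |x| := le_abs_self x
      _ < ε * z := hx1
      _ < ε * X0 ω := by nlinarith
      _ ≤ Y ω * X0 ω := by nlinarith
  have hprod : ℙ (X0 ⁻¹' (Set.Ioi z) ∩ Y ⁻¹' (Set.Ici ε))
      = ℙ (X0 ⁻¹' (Set.Ioi z)) * ℙ (Y ⁻¹' (Set.Ici ε)) :=
    hind.measure_inter_preimage_eq_mul _ _ measurableSet_Ioi measurableSet_Ici
  have hne : ℙ {ω | x < Y ω * X0 ω} ≠ 0 := by
    intro h
    have h1 : ℙ (X0 ⁻¹' (Set.Ioi z) ∩ Y ⁻¹' (Set.Ici ε)) = 0 :=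
      le_antisymm (le_trans (measure_mono hsub) h.le) zero_le
    rw [hprod] at h1
    rcases mul_eq_zero.mp h1 with h2 | h2
    · exact hXpos z h2
    · exact hYe h2
  exact ENNReal.toReal_pos hne (measure_ne_top _ _)

end helpers

/-- closure of `𝒫𝒟ₙ` under independent scalar product, for a vector with
identically distributed components, under the multivariate truncation condition. -/
theorem stmt16 {Ω : Type*} [MeasureSpace Ω] [IsProbabilityMeasure (ℙ : Measure Ω)]
    {n : ℕ} (X : Fin n → Ω → ℝ) (Y : Ω → ℝ)
    (hXm : ∀ i, Measurable (X i)) (hYm : Measurable Y)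
    (hid : ∀ i j : Fin n, ∀ x : ℝ, ℙ {ω | x < X i ω} = ℙ {ω | x < X j ω})
    (hindep : IndepFun (fun ω i => X i ω) Y ℙ)
    (hGneg : ℙ {ω | Y ω < 0} = 0) (hG0 : ℙ {ω | Y ω ≤ 0} < 1)
    (F0 : ℝ → ℝ) (hF0pos : ∀ x, 0 < F0 x) (hF0 : PosDec F0)
    (hkern : ∀ i, ∃ c : ℝ, 0 < c ∧
      Tendsto (fun x => rtail (X i) x / F0 x) atTop (𝓝 c))
    (hjointPD : ∀ S : Finset (Fin n), S.Nonempty → ∀ t v : Fin n → ℝ,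
      (∀ i, 0 < t i) → (∀ i, 1 < v i) →
      limsup (fun x => jtail X S (fun i => v i * t i) x / jtail X S t x) atTop < 1)
    (a : ℝ → ℝ) (ha1 : Tendsto a atTop atTop)
    (ha2 : Tendsto (fun x => a x / x) atTop (𝓝 0))
    (ha3 : ∀ S : Finset (Fin n), S.Nonempty → ∀ t : Fin n → ℝ, (∀ i, 0 < t i) →
      (fun x => rtail Y (a x)) =o[atTop]
        fun x => jtail (fun i ω => Y ω * X i ω) S t x) :
    (∃ H0 : ℝ → ℝ, (∀ x, 0 < H0 x) ∧ PosDec H0 ∧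
      ∀ i, ∃ c : ℝ, 0 < c ∧
        Tendsto (fun x => rtail (fun ω => Y ω * X i ω) x / H0 x) atTop (𝓝 c)) ∧
    ∀ S : Finset (Fin n), S.Nonempty → ∀ t v : Fin n → ℝ,
      (∀ i, 0 < t i) → (∀ i, 1 < v i) →
      limsup (fun x => jtail (fun i ω => Y ω * X i ω) S (fun i => v i * t i) x /
        jtail (fun i ω => Y ω * X i ω) S t x) atTop < 1 := by
  have part2 : ∀ S : Finset (Fin n), S.Nonempty → ∀ t v : Fin n → ℝ,
      (∀ i, 0 < t i) → (∀ i, 1 < v i) →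
      limsup (fun x => jtail (fun i ω => Y ω * X i ω) S (fun i => v i * t i) x /
        jtail (fun i ω => Y ω * X i ω) S t x) atTop < 1 := by
    intro S hS t v ht hv
    exact key X Y hXm hYm hindep hGneg S hS t v ht hv (hjointPD S hS t v ht hv)
      a ha1 ha2 (ha3 S hS t ht)
  refine ⟨?_, part2⟩
  rcases Nat.eq_zero_or_pos n with hn | hn
  · subst hn
    exact ⟨F0, hF0pos, hF0, fun i => i.elim0⟩
  · set i0 : Fin n := ⟨0, hn⟩ with hi0
    set H0 : ℝ → ℝ := rtail (fun ω => Y ω * X i0 ω) with hH0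
    obtain ⟨c0, hc0, hk0⟩ := hkern i0
    have hind0 : IndepFun (X i0) Y ℙ := hindep.comp (measurable_pi_apply i0) measurable_id
    have hH0pos : ∀ x, 0 < H0 x := fun x =>
      prodtail_pos (X i0) Y (hXm i0) hYm hind0 hG0 F0 hF0pos c0 hc0 hk0 x
    have hsingle : ∀ c : Fin n → ℝ, ∀ x : ℝ,
        jtail (fun i ω => Y ω * X i ω) {i0} c x = H0 (c i0 * x) := by
      intro c x
      have hset : {ω | ∀ i ∈ ({i0}:Finset (Fin n)), c i * x < Y ω * X i ω}
          = {ω | c i0 * x < Y ω * X i0 ω} := by ext ω; simp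
      rw [hH0, jtail, rtail, hset]
    refine ⟨H0, hH0pos, ?_, ?_⟩
    · intro v hv
      have := part2 {i0} ⟨i0, Finset.mem_singleton_self i0⟩ (fun _ => 1) (fun _ => v)
        (fun _ => one_pos) (fun _ => hv)
      have heq : (fun x => jtail (fun i ω => Y ω * X i ω) {i0}
            (fun i => (fun _ => v) i * (fun _ => (1:ℝ)) i) x /
          jtail (fun i ω => Y ω * X i ω) {i0} (fun _ => (1:ℝ)) x)
          = fun x => H0 (v * x) / H0 x := by
        funext x
        rw [hsingle, hsingle]
        simp
      rw [heq] at this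
      exact this
    · intro i
      refine ⟨1, one_pos, ?_⟩
      have heq : ∀ x : ℝ, rtail (fun ω => Y ω * X i ω) x / H0 x = 1 := by
        intro x
        have h1 : rtail (fun ω => Y ω * X i ω) x = H0 x := by
          rw [hH0, rtail, rtail, eqlaw X Y hXm hYm hid hindep i i0 x]
        rw [h1, div_self (ne_of_gt (hH0pos x))]
      rw [show (fun x => rtail (fun ω => Y ω * X i ω) x / H0 x) = fun _ => (1:ℝ) from
        funext heq]
      exact tendsto_const_nhds
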